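/- Let ℓ ≥ 3 and let α be a real number. If u is an infinite word over an ℓ-letter alphabet A that is ordinary α⁺-free, then the infinite word v over the 3ℓ-letter alphabet A × {0,1,2} defined by v(n) = (u(n), n mod 3) is undirected α⁺-free. -/

import Mathlib

/-- `x` is a (finite, contiguous) factor of the infinite word `w`. -/
def InfFactor {A : Type*} (x : List A) (w : ℕ → A) : Prop :=
  ∃ i : ℕ, x = (List.range x.length).map fun j => w (i + j)

/-- `z` is an undirected `r`-power: `z = x ++ y ++ x'` with `x` nonempty,
`x' = x` or `x' = x.reverse`, and `|x y x'| / |x y| = r`. -/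
def IsUndirectedPow {A : Type*} (r : ℚ) (z : List A) : Prop :=
  ∃ x y x' : List A, z = x ++ y ++ x' ∧ x ≠ [] ∧ (x' = x ∨ x' = x.reverse) ∧
    (z.length : ℚ) = r * ((x.length : ℚ) + (y.length : ℚ))

/-- `z` is an ordinary `r`-power: `z = x ++ y ++ x` with `x` nonempty and `|x y x| / |x y| = r`. -/
def IsOrdinaryPow {A : Type*} (r : ℚ) (z : List A) : Prop :=
  ∃ x y : List A, z = x ++ y ++ x ∧ x ≠ [] ∧
    (z.length : ℚ) = r * ((x.length : ℚ) + (y.length : ℚ))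

/-- The infinite word `w` is undirected `α`-free: no factor of `w` is an undirected
`r`-power with rational `r ≥ α` (where `1 < r ≤ 2`). -/
def UndirectedFree {A : Type*} (α : ℝ) (w : ℕ → A) : Prop :=
  ∀ z : List A, InfFactor z w →
    ∀ r : ℚ, 1 < r → r ≤ 2 → α ≤ (r : ℝ) → ¬ IsUndirectedPow r z

/-- The infinite word `w` is undirected `α⁺`-free: no factor of `w` is an undirected
`r`-power with rational `r > α` (where `1 < r ≤ 2`). -/
def UndirectedPlusFree {A : Type*} (α : ℝ) (w : ℕ → A) : Prop :=
  ∀ z : List A, InfFactor z w →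
    ∀ r : ℚ, 1 < r → r ≤ 2 → α < (r : ℝ) → ¬ IsUndirectedPow r z

/-- The infinite word `w` is (ordinary) `α`-free. -/
def OrdinaryFree {A : Type*} (α : ℝ) (w : ℕ → A) : Prop :=
  ∀ z : List A, InfFactor z w →
    ∀ r : ℚ, 1 < r → r ≤ 2 → α ≤ (r : ℝ) → ¬ IsOrdinaryPow r z

/-- The infinite word `w` is (ordinary) `α⁺`-free. -/
def OrdinaryPlusFree {A : Type*} (α : ℝ) (w : ℕ → A) : Prop :=
  ∀ z : List A, InfFactor z w →
    ∀ r : ℚ, 1 < r → r ≤ 2 → α < (r : ℝ) → ¬ IsOrdinaryPow r z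

/-- The undirected repetition threshold for `k` letters: the infimum of the set of
rationals `r ∈ (1, 2]` such that undirected `r`-powers are `k`-avoidable. -/
noncomputable def URT (k : ℕ) : ℝ :=
  sInf {a : ℝ | ∃ r : ℚ, a = (r : ℝ) ∧ 1 < r ∧ r ≤ 2 ∧
    ∃ w : ℕ → Fin k, UndirectedFree (r : ℝ) w}

/-- The (ordinary) repetition threshold for `k` letters. -/
noncomputable def RT (k : ℕ) : ℝ :=
  sInf {a : ℝ | ∃ r : ℚ, a = (r : ℝ) ∧ 1 < r ∧ r ≤ 2 ∧
    ∃ w : ℕ → Fin k, OrdinaryFree (r : ℝ) w}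

/-- If `u` is an ordinary `α⁺`-free infinite word over an `ℓ`-letter alphabet `A` (`ℓ ≥ 3`),
then the infinite word `n ↦ (u n, n mod 3)` over the `3ℓ`-letter alphabet `A × Fin 3`
is undirected `α⁺`-free. -/
theorem directProduct_undirectedPlusFree {A : Type*} [Fintype A] (ℓ : ℕ) (hℓ : 3 ≤ ℓ)
    (hA : Fintype.card A = ℓ) (α : ℝ) (u : ℕ → A) (hu : OrdinaryPlusFree α u) :
    UndirectedPlusFree α
      (fun n => ((u n, (⟨n % 3, Nat.mod_lt n (by norm_num)⟩ : Fin 3)) : A × Fin 3)) := by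
  intro z hz r hr1 hr2 hαr hpow
  obtain ⟨i, hzeq⟩ := hz
  obtain ⟨x, y, x', hsplit, hx, hx', hlen⟩ := hpow
  set v : ℕ → A × Fin 3 :=
    fun n => ((u n, (⟨n % 3, Nat.mod_lt n (by norm_num)⟩ : Fin 3)) : A × Fin 3) with hv
  have hget : ∀ n (hn : n < z.length), z[n] = v (i + n) := by
    intro n hn
    rw [List.getElem_of_eq hzeq hn]
    simp
  -- ordinary case as a reusable fact
  have hord : x' = x → False := by
    intro he
    subst he
    refine hu (z.map Prod.fst) ⟨i, ?_⟩ r hr1 hr2 hαr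
      ⟨x'.map Prod.fst, y.map Prod.fst, ?_, ?_, ?_⟩
    · rw [hzeq]
      simp [List.map_map, Function.comp]
      intro a _; rfl
    · rw [hsplit]; simp
    · simpa using hx
    · simpa using hlen
  rcases hx' with he | he
  · exact hord he
  · -- reversal case
    by_cases hm : x'.length ≤ 1
    · apply hord
      rw [he]
      have h1 : x.length = 1 := by
        rw [he, List.length_reverse] at hm
        have := List.length_pos_iff.mpr hx
        omega
      obtain ⟨a, ha⟩ := List.length_eq_one_iff.mp h1
      simp [ha]
    · push_neg at hm
      rw [he, List.length_reverse] at hm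
      set m := x.length with hmx
      set k := y.length with hky
      have hzl : z.length = m + k + m := by
        rw [hsplit]; simp [he, hmx, hky]; ring
      have key : ∀ j, j < m → v (i + (m + k + j)) = v (i + (m - 1 - j)) := by
        intro j hj
        have h1 : m - 1 - j < z.length := by omega
        have h2 : m + k + j < z.length := by omega
        have e1 : z[m - 1 - j]'h1 = x[m - 1 - j]'(by omega) := by
          rw [List.getElem_of_eq hsplit h1]
          rw [List.getElem_append_left (by simp only [List.length_append]; omega),
            List.getElem_append_left (by omega)]
        have e2 : z[m + k + j]'h2 = x[m - 1 - j]'(by omega) := by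
          rw [List.getElem_of_eq hsplit h2]
          rw [List.getElem_append_right (by simp only [List.length_append]; omega)]
          simp only [he]
          rw [List.getElem_reverse]
          congr 1
          simp only [List.length_append, List.length_reverse]
          omega
        rw [← hget _ h2, ← hget _ h1, e1, e2]
      have k0 := congrArg (fun p => (p.2 : Fin 3).val) (key 0 (by omega))
      have k1 := congrArg (fun p => (p.2 : Fin 3).val) (key 1 hm)
      simp only [hv] at k0 k1
      omega
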